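/- The logical σ_Z distance of the 3-torus code (qubits on edges) in the direction-0 sector equals N²: the minimum cardinality of a 1-cocycle T of the N×N×N 3-torus lattice with |T ∩ L| odd, where L = {((t,0,0),0) : t ∈ ZMod N} is the straight loop, is exactly N²; in particular every such nontrivial cocycle has at least N² edges, and the plane P_0 attains this minimum. -/

import Mathlib

/-- The standard basis vector `eᵢ` of `(ZMod N)³` (vertices indexed by `Fin 3 → ZMod N`). -/
def basis3 (N : ℕ) (i : Fin 3) : Fin 3 → ZMod N := fun j => if j = i then 1 else 0

/-- The star of a vertex `v` of the `N × N × N` 3-torus lattice: the six edges incident to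
`v`, namely `(v, i)` and `(v - eᵢ, i)` for `i ∈ Fin 3`. -/
def star3 (N : ℕ) (v : Fin 3 → ZMod N) : Set ((Fin 3 → ZMod N) × Fin 3) :=
  {e | ∃ i : Fin 3, e = (v, i) ∨ e = (v - basis3 N i, i)}

/-- The boundary of a face `(v, k)` of the 3-torus lattice: the four edges
`(v, i)`, `(v, j)`, `(v + e_j, i)`, `(v + e_i, j)` where `{i, j} = {0,1,2} \ {k}`. -/
def faceBd3 (N : ℕ) (f : (Fin 3 → ZMod N) × Fin 3) : Set ((Fin 3 → ZMod N) × Fin 3) :=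
  {e | ∃ i : Fin 3, i ≠ f.2 ∧
      (e = (f.1, i) ∨ ∃ j : Fin 3, j ≠ f.2 ∧ j ≠ i ∧ e = (f.1 + basis3 N j, i))}

/-- `S` is a 1-cycle of the 3-torus lattice. -/
def isCycle3 (N : ℕ) (S : Set ((Fin 3 → ZMod N) × Fin 3)) : Prop :=
  ∀ v : Fin 3 → ZMod N, Even ((S ∩ star3 N v).ncard)

/-- `T` is a 1-cocycle of the 3-torus lattice. -/
def isCocycle3 (N : ℕ) (T : Set ((Fin 3 → ZMod N) × Fin 3)) : Prop :=
  ∀ f : (Fin 3 → ZMod N) × Fin 3, Even ((T ∩ faceBd3 N f).ncard)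

/-- The plane `P_x`: all direction-0 edges whose base point has first coordinate `x`;
a non-compressible 2-torus in the 3-torus. -/
def plane3 (N : ℕ) (x : ZMod N) : Set ((Fin 3 → ZMod N) × Fin 3) :=
  {e | ∃ y z : ZMod N, e = (![x, y, z], 0)}

/-- The straight loop `L = {((t,0,0), 0) : t ∈ ZMod N}`, a non-contractible loop. -/
def loop3 (N : ℕ) : Set ((Fin 3 → ZMod N) × Fin 3) :=
  {e | ∃ t : ZMod N, e = (![t, 0, 0], 0)}

/-- The coboundary of an edge `e`: all faces `f` with `e ∈ ∂f`. -/
def coface3 (N : ℕ) (e : (Fin 3 → ZMod N) × Fin 3) : Set ((Fin 3 → ZMod N) × Fin 3) :=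
  {f | e ∈ faceBd3 N f}

/-- The boundary of a cube `c`: the six faces `(c, k)` and `(c + e_k, k)` for `k ∈ Fin 3`. -/
def cubeBd3 (N : ℕ) (c : Fin 3 → ZMod N) : Set ((Fin 3 → ZMod N) × Fin 3) :=
  {f | ∃ k : Fin 3, f = (c, k) ∨ f = (c + basis3 N k, k)}

open scoped Classical

namespace T3Aux

variable {N : ℕ}

noncomputable def ind (T : Set ((Fin 3 → ZMod N) × Fin 3))
    (e : (Fin 3 → ZMod N) × Fin 3) : ZMod 2 := if e ∈ T then 1 else 0

lemma cast2_eq_zero_iff (n : ℕ) : (n : ZMod 2) = 0 ↔ Even n := by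
  rw [ZMod.natCast_eq_zero_iff]
  exact (even_iff_two_dvd).symm

lemma cast2_eq_one_iff (n : ℕ) : (n : ZMod 2) = 1 ↔ Odd n := by
  rw [← Nat.not_even_iff_odd, ← cast2_eq_zero_iff]
  have h : ∀ x : ZMod 2, x = 1 ↔ ¬ x = 0 := by decide
  exact h _

lemma basis3_ne_zero (hN : 2 ≤ N) (i : Fin 3) : basis3 N i ≠ 0 := by
  haveI : Fact (1 < N) := ⟨hN⟩
  intro h
  have := congrFun h i
  simp [basis3] at this

lemma faceBd3_eq (N : ℕ) (v : Fin 3 → ZMod N) {k i j : Fin 3}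
    (hik : i ≠ k) (hjk : j ≠ k) (hij : j ≠ i) :
    faceBd3 N (v, k) =
      {(v, i), (v, j), (v + basis3 N j, i), (v + basis3 N i, j)} := by
  have htri : ∀ i j k l : Fin 3, i ≠ k → j ≠ k → j ≠ i → l ≠ k → (l = i ∨ l = j) := by decide
  ext e
  simp only [faceBd3, Set.mem_setOf_eq, Set.mem_insert_iff, Set.mem_singleton_iff]
  constructor
  · rintro ⟨i', hi', h⟩
    rcases h with rfl | ⟨j', hj', hj'i, rfl⟩
    · rcases htri i j k i' hik hjk hij hi' with h1 | h1
      · exact Or.inl (by rw [h1])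
      · exact Or.inr (Or.inl (by rw [h1]))
    · rcases htri i j k i' hik hjk hij hi' with h1 | h1 <;>
        rcases htri i j k j' hik hjk hij hj' with h2 | h2
      · exact absurd (h2.trans h1.symm) hj'i
      · exact Or.inr (Or.inr (Or.inl (by rw [h1, h2])))
      · exact Or.inr (Or.inr (Or.inr (by rw [h1, h2])))
      · exact absurd (h2.trans h1.symm) hj'i
  · rintro (rfl | rfl | rfl | rfl)
    · exact ⟨i, hik, Or.inl rfl⟩
    · exact ⟨j, hjk, Or.inl rfl⟩
    · exact ⟨i, hik, Or.inr ⟨j, hjk, hij, rfl⟩⟩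
    · exact ⟨j, hjk, Or.inr ⟨i, hik, fun h => hij h.symm, rfl⟩⟩

lemma ncard_inter_range {ι : Type*} [Fintype ι] (T : Set ((Fin 3 → ZMod N) × Fin 3))
    (g : ι → (Fin 3 → ZMod N) × Fin 3) (hg : Function.Injective g) :
    (((T ∩ Set.range g).ncard : ZMod 2)) = ∑ i, ind T (g i) := by
  rw [← Set.image_preimage_eq_inter_range, Set.ncard_image_of_injective _ hg]
  have h1 : g ⁻¹' T = ↑(Finset.univ.filter (fun i => g i ∈ T)) := by ext x; simp
  rw [h1, Set.ncard_coe_finset, Finset.card_eq_sum_ones, Nat.cast_sum, Finset.sum_filter]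
  apply Finset.sum_congr rfl
  intro i _
  by_cases h : g i ∈ T <;> simp [ind, h]

lemma four_range (a b c d : (Fin 3 → ZMod N) × Fin 3) :
    ({a, b, c, d} : Set ((Fin 3 → ZMod N) × Fin 3)) = Set.range ![a, b, c, d] := by
  ext x
  constructor
  · rintro (rfl | rfl | rfl | rfl)
    exacts [⟨0, rfl⟩, ⟨1, rfl⟩, ⟨2, rfl⟩, ⟨3, rfl⟩]
  · rintro ⟨i, rfl⟩
    fin_cases i
    · exact Or.inl rfl
    · exact Or.inr (Or.inl rfl)
    · exact Or.inr (Or.inr (Or.inl rfl))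
    · exact Or.inr (Or.inr (Or.inr rfl))

lemma ncard_inter_four (T : Set ((Fin 3 → ZMod N) × Fin 3))
    {a b c d : (Fin 3 → ZMod N) × Fin 3}
    (hab : a ≠ b) (hac : a ≠ c) (had : a ≠ d) (hbc : b ≠ c) (hbd : b ≠ d) (hcd : c ≠ d) :
    ((T ∩ {a, b, c, d}).ncard : ZMod 2) = ind T a + ind T b + ind T c + ind T d := by
  have hinj : Function.Injective ![a, b, c, d] := by
    intro i j h
    fin_cases i <;> fin_cases j <;> simp_all
  rw [four_range, ncard_inter_range T _ hinj, Fin.sum_univ_four]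
  rfl

lemma ncard_face (hN : 2 ≤ N) (T : Set ((Fin 3 → ZMod N) × Fin 3))
    (v : Fin 3 → ZMod N) {k i j : Fin 3}
    (hik : i ≠ k) (hjk : j ≠ k) (hij : j ≠ i) :
    ((T ∩ faceBd3 N (v, k)).ncard : ZMod 2) =
      ind T (v, i) + ind T (v, j) + ind T (v + basis3 N j, i) + ind T (v + basis3 N i, j) := by
  rw [faceBd3_eq N v hik hjk hij]
  have hij' : i ≠ j := fun h => hij h.symm
  exact ncard_inter_four T
    (by simp [Prod.ext_iff, hij'])
    (by simp [Prod.ext_iff]; exact basis3_ne_zero hN j)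
    (by simp [Prod.ext_iff, hij'])
    (by simp [Prod.ext_iff, hij])
    (by simp [Prod.ext_iff]; exact basis3_ne_zero hN i)
    (by simp [Prod.ext_iff, hij'])

lemma cocycle_rel (hN : 2 ≤ N) {T : Set ((Fin 3 → ZMod N) × Fin 3)}
    (hT : isCocycle3 N T) (v : Fin 3 → ZMod N) {k i j : Fin 3}
    (hik : i ≠ k) (hjk : j ≠ k) (hij : j ≠ i) :
    ind T (v, i) + ind T (v, j) + ind T (v + basis3 N j, i) + ind T (v + basis3 N i, j) = 0 := by
  rw [← ncard_face hN T v hik hjk hij]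
  exact (cast2_eq_zero_iff _).mpr (hT (v, k))


lemma vec_add_basis0 (t y z : ZMod N) : ![t, y, z] + basis3 N 0 = ![t + 1, y, z] := by
  funext i; fin_cases i <;> simp [basis3]

lemma vec_add_basis1 (t y z : ZMod N) : ![t, y, z] + basis3 N 1 = ![t, y + 1, z] := by
  funext i; fin_cases i <;> simp [basis3]

lemma vec_add_basis2 (t y z : ZMod N) : ![t, y, z] + basis3 N 2 = ![t, y, z + 1] := by
  funext i; fin_cases i <;> simp [basis3]

lemma vec_eta (v : Fin 3 → ZMod N) : ![v 0, v 1, v 2] = v := by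
  funext i; fin_cases i <;> rfl

lemma const_of_step [NeZero N] {f : ZMod N → ZMod 2} (h : ∀ x, f (x + 1) = f x)
    (a b : ZMod N) : f a = f b := by
  have key : ∀ n : ℕ, f n = f 0 := by
    intro n
    induction n with
    | zero => norm_num
    | succ n ih => rw [Nat.cast_succ, h, ih]
  obtain ⟨m, rfl⟩ := ZMod.natCast_zmod_surjective a
  obtain ⟨m', rfl⟩ := ZMod.natCast_zmod_surjective b
  rw [key, key]
noncomputable def lineSum [NeZero N] (T : Set ((Fin 3 → ZMod N) × Fin 3)) (y z : ZMod N) : ZMod 2 :=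
  ∑ t : ZMod N, ind T (![t, y, z], 0)

lemma cancel4 : ∀ a b c : ZMod 2, a + c + b + c = 0 → b = a := by decide

lemma shift_sum [NeZero N] (g : ZMod N → ZMod 2) :
    (∑ t : ZMod N, g (t + 1)) = ∑ t : ZMod N, g t :=
  Fintype.sum_equiv (Equiv.addRight 1) _ _ (fun t => by rw [Equiv.coe_addRight])

lemma lineSum_step_z [NeZero N] (hN : 2 ≤ N) {T : Set ((Fin 3 → ZMod N) × Fin 3)}
    (hT : isCocycle3 N T) (y z : ZMod N) : lineSum T y (z + 1) = lineSum T y z := by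
  have h0 : (∑ t : ZMod N, (ind T (![t, y, z], 0) + ind T (![t, y, z], 2)
      + ind T (![t, y, z + 1], 0) + ind T (![t + 1, y, z], 2))) = 0 := by
    apply Finset.sum_eq_zero
    intro t _
    have h := cocycle_rel hN hT ![t, y, z] (k := 1) (i := 0) (j := 2)
      (by decide) (by decide) (by decide)
    rwa [vec_add_basis2, vec_add_basis0] at h
  rw [Finset.sum_add_distrib, Finset.sum_add_distrib, Finset.sum_add_distrib,
    shift_sum (fun t => ind T (![t, y, z], 2))] at h0
  show (∑ t : ZMod N, ind T (![t, y, z + 1], 0)) = ∑ t : ZMod N, ind T (![t, y, z], 0)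
  exact cancel4 (∑ t : ZMod N, ind T (![t, y, z], 0))
    (∑ t : ZMod N, ind T (![t, y, z + 1], 0)) (∑ t : ZMod N, ind T (![t, y, z], 2)) h0

lemma lineSum_step_y [NeZero N] (hN : 2 ≤ N) {T : Set ((Fin 3 → ZMod N) × Fin 3)}
    (hT : isCocycle3 N T) (y z : ZMod N) : lineSum T (y + 1) z = lineSum T y z := by
  have h0 : (∑ t : ZMod N, (ind T (![t, y, z], 0) + ind T (![t, y, z], 1)
      + ind T (![t, y + 1, z], 0) + ind T (![t + 1, y, z], 1))) = 0 := by
    apply Finset.sum_eq_zero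
    intro t _
    have h := cocycle_rel hN hT ![t, y, z] (k := 2) (i := 0) (j := 1)
      (by decide) (by decide) (by decide)
    rwa [vec_add_basis1, vec_add_basis0] at h
  rw [Finset.sum_add_distrib, Finset.sum_add_distrib, Finset.sum_add_distrib,
    shift_sum (fun t => ind T (![t, y, z], 1))] at h0
  show (∑ t : ZMod N, ind T (![t, y + 1, z], 0)) = ∑ t : ZMod N, ind T (![t, y, z], 0)
  exact cancel4 (∑ t : ZMod N, ind T (![t, y, z], 0))
    (∑ t : ZMod N, ind T (![t, y + 1, z], 0)) (∑ t : ZMod N, ind T (![t, y, z], 1)) h0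

lemma lineSum_const [NeZero N] (hN : 2 ≤ N) {T : Set ((Fin 3 → ZMod N) × Fin 3)}
    (hT : isCocycle3 N T) (y z : ZMod N) : lineSum T y z = lineSum T 0 0 := by
  have h1 : lineSum T y z = lineSum T y 0 :=
    const_of_step (fun x => lineSum_step_z hN hT y x) z 0
  have h2 : lineSum T y 0 = lineSum T 0 0 :=
    const_of_step (f := fun x => lineSum T x 0) (fun x => lineSum_step_y hN hT x 0) y 0
  rw [h1, h2]


lemma mem_plane3 (u : Fin 3 → ZMod N) (d : Fin 3) :
    (u, d) ∈ plane3 N 0 ↔ d = 0 ∧ u 0 = 0 := by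
  constructor
  · rintro ⟨y, z, h⟩
    rw [Prod.mk.injEq] at h
    exact ⟨h.2, by rw [h.1]; rfl⟩
  · rintro ⟨rfl, h0⟩
    refine ⟨u 1, u 2, ?_⟩
    rw [← h0, vec_eta]

lemma plane_inter_loop :
    plane3 N 0 ∩ loop3 N = {((![0, 0, 0] : Fin 3 → ZMod N), (0 : Fin 3))} := by
  ext e
  constructor
  · rintro ⟨⟨y, z, rfl⟩, t, he⟩
    rw [Prod.mk.injEq] at he
    have h1 := congrFun he.1 1
    have h2 := congrFun he.1 2
    simp only [Matrix.cons_val_one, Matrix.head_cons, Matrix.cons_val_two, Matrix.tail_cons, Matrix.cons_val_zero] at h1 h2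
    rw [Set.mem_singleton_iff, h1, h2]
  · rintro rfl
    exact ⟨⟨0, 0, rfl⟩, 0, rfl⟩

lemma apply_zero_add_basis (v : Fin 3 → ZMod N) {j : Fin 3} (hj : j ≠ 0) :
    (v + basis3 N j) 0 = v 0 := by
  rw [Pi.add_apply]
  simp [basis3, Ne.symm hj]

lemma plane_cocycle (hN : 2 ≤ N) : isCocycle3 N (plane3 N 0) := by
  intro f
  obtain ⟨v, k⟩ := f
  have hind0 : ∀ (u : Fin 3 → ZMod N) (d : Fin 3), d ≠ 0 →
      ind (plane3 N 0) (u, d) = 0 := by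
    intro u d hd; simp [ind, mem_plane3, hd]
  have hind : ∀ u : Fin 3 → ZMod N,
      ind (plane3 N 0) (u, 0) = if u 0 = 0 then 1 else 0 := by
    intro u; simp [ind, mem_plane3]
  refine (cast2_eq_zero_iff _).mp ?_
  fin_cases k
  · show ((plane3 N 0 ∩ faceBd3 N (v, 0)).ncard : ZMod 2) = 0
    rw [ncard_face hN (plane3 N 0) v (k := 0) (i := 1) (j := 2)
      (by decide) (by decide) (by decide)]
    rw [hind0 _ 1 (by decide), hind0 _ 2 (by decide), hind0 _ 1 (by decide),
      hind0 _ 2 (by decide)]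
    decide
  · show ((plane3 N 0 ∩ faceBd3 N (v, 1)).ncard : ZMod 2) = 0
    rw [ncard_face hN (plane3 N 0) v (k := 1) (i := 0) (j := 2)
      (by decide) (by decide) (by decide)]
    rw [hind0 _ 2 (by decide), hind0 _ 2 (by decide), hind, hind,
      apply_zero_add_basis v (j := 2) (by decide)]
    by_cases h : v 0 = 0 <;> simp [h] <;> decide
  · show ((plane3 N 0 ∩ faceBd3 N (v, 2)).ncard : ZMod 2) = 0
    rw [ncard_face hN (plane3 N 0) v (k := 2) (i := 0) (j := 1)
      (by decide) (by decide) (by decide)]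
    rw [hind0 _ 1 (by decide), hind0 _ 1 (by decide), hind, hind,
      apply_zero_add_basis v (j := 1) (by decide)]
    by_cases h : v 0 = 0 <;> simp [h] <;> decide

lemma ncard_range {ι : Type*} [Fintype ι] (g : ι → (Fin 3 → ZMod N) × Fin 3)
    (hg : Function.Injective g) : (Set.range g).ncard = Fintype.card ι := by
  rw [← Set.image_univ, Set.ncard_image_of_injective _ hg, Set.ncard_univ,
    Nat.card_eq_fintype_card]

lemma line_inj (y z : ZMod N) :
    Function.Injective (fun t : ZMod N => ((![t, y, z] : Fin 3 → ZMod N), (0 : Fin 3))) := by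
  intro a b h
  have := congrFun (congrArg Prod.fst h) 0
  simpa using this

lemma line_sum_eq [NeZero N] (T : Set ((Fin 3 → ZMod N) × Fin 3)) (y z : ZMod N) :
    ((T ∩ Set.range (fun t : ZMod N => ((![t, y, z] : Fin 3 → ZMod N), (0 : Fin 3)))).ncard
      : ZMod 2) = lineSum T y z :=
  ncard_inter_range T _ (line_inj y z)

lemma loop_range : loop3 N =
    Set.range (fun t : ZMod N => ((![t, 0, 0] : Fin 3 → ZMod N), (0 : Fin 3))) := by
  ext e
  constructor
  · rintro ⟨t, rfl⟩; exact ⟨t, rfl⟩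
  · rintro ⟨t, rfl⟩; exact ⟨t, rfl⟩

lemma plane_range : plane3 N 0 =
    Set.range (fun p : ZMod N × ZMod N => ((![0, p.1, p.2] : Fin 3 → ZMod N), (0 : Fin 3))) := by
  ext e
  constructor
  · rintro ⟨y, z, rfl⟩; exact ⟨(y, z), rfl⟩
  · rintro ⟨p, rfl⟩; exact ⟨p.1, p.2, rfl⟩

lemma plane_inj :
    Function.Injective
      (fun p : ZMod N × ZMod N => ((![0, p.1, p.2] : Fin 3 → ZMod N), (0 : Fin 3))) := by
  intro p q h
  have h1 := congrFun (congrArg Prod.fst h) 1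
  have h2 := congrFun (congrArg Prod.fst h) 2
  simp only [Matrix.cons_val_one, Matrix.head_cons, Matrix.cons_val_two, Matrix.tail_cons] at h1 h2
  exact Prod.ext h1 h2

lemma lower_bound (hN : 2 ≤ N) {T : Set ((Fin 3 → ZMod N) × Fin 3)}
    (hT : isCocycle3 N T) (hodd : Odd ((T ∩ loop3 N).ncard)) : N ^ 2 ≤ T.ncard := by
  haveI : NeZero N := ⟨by omega⟩
  have hS00 : lineSum T 0 0 = 1 := by
    rw [← line_sum_eq T 0 0, ← loop_range]
    exact (cast2_eq_one_iff _).mpr hodd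
  have hall : ∀ p : ZMod N × ZMod N,
      (T ∩ Set.range (fun t : ZMod N =>
        ((![t, p.1, p.2] : Fin 3 → ZMod N), (0 : Fin 3)))).Nonempty := by
    intro p
    rw [Set.nonempty_iff_ne_empty]
    intro hemp
    have h1 := line_sum_eq T p.1 p.2
    rw [hemp, lineSum_const hN hT, hS00] at h1
    simp at h1
  choose F hF using hall
  have hinj : Function.Injective F := by
    intro p q h
    obtain ⟨t, ht⟩ := (hF p).2
    obtain ⟨s, hs⟩ := (hF q).2
    rw [← ht, ← hs] at h
    have h1 := congrFun (congrArg Prod.fst h) 1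
    have h2 := congrFun (congrArg Prod.fst h) 2
    simp only [Matrix.cons_val_one, Matrix.head_cons, Matrix.cons_val_two,
      Matrix.tail_cons] at h1 h2
    exact Prod.ext h1 h2
  calc N ^ 2 = (Set.range F).ncard := by
        rw [ncard_range F hinj, Fintype.card_prod, ZMod.card, sq]
    _ ≤ T.ncard :=
        Set.ncard_le_ncard (Set.range_subset_iff.mpr fun p => (hF p).1) (Set.toFinite T)

end T3Aux

/-- The logical σ_Z distance of the 3-torus code (qubits on edges) in the direction-0
sector equals `N²`: the least cardinality of a 1-cocycle meeting the straight loop `L`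
an odd number of times is `N²`, and the plane `P 0` attains this minimum. -/

theorem torus3_sigmaZ_distance (N : ℕ) (hN : 2 ≤ N) :
    IsLeast {k : ℕ | ∃ T : Set ((Fin 3 → ZMod N) × Fin 3),
        isCocycle3 N T ∧ Odd ((T ∩ loop3 N).ncard) ∧ T.ncard = k} (N ^ 2) ∧
    isCocycle3 N (plane3 N 0) ∧ Odd ((plane3 N 0 ∩ loop3 N).ncard) ∧
    (plane3 N 0).ncard = N ^ 2 := by
  haveI : NeZero N := ⟨by omega⟩
  have hpc : isCocycle3 N (plane3 N 0) := T3Aux.plane_cocycle hN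
  have hcard : (plane3 N 0).ncard = N ^ 2 := by
    rw [T3Aux.plane_range, T3Aux.ncard_range _ T3Aux.plane_inj, Fintype.card_prod,
      ZMod.card, sq]
  have hodd : Odd ((plane3 N 0 ∩ loop3 N).ncard) := by
    rw [T3Aux.plane_inter_loop, Set.ncard_singleton]
    exact odd_one
  exact ⟨⟨⟨plane3 N 0, hpc, hodd, hcard⟩,
    fun k ⟨T, hT, hTodd, hk⟩ => hk ▸ T3Aux.lower_bound hN hT hTodd⟩, hpc, hodd, hcard⟩
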